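/- Let F ∈ ℂ[x₀, …, x_n] and G ∈ ℂ[y₀, …, y_m] be homogeneous polynomials of the same degree d in disjoint sets of variables, both regarded as elements of ℂ[x₀, …, x_n, y₀, …, y_m]. If there exists an integer s with 0 < s < d such that dim H_{∂^s F} = srk(F) and dim H_{∂^s G} = srk(G), then srk(F + G) = srk(F) + srk(G), where all symmetric ranks are computed in ℂ[x₀, …, x_n, y₀, …, y_m]. -/

import Mathlib

open MvPolynomial

/-- Iterated partial derivative of a polynomial along a list of variables. -/
noncomputable def derivList {σ : Type*} (l : List σ) (F : MvPolynomial σ ℂ) :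
    MvPolynomial σ ℂ :=
  l.foldl (fun G i => MvPolynomial.pderiv i G) F

/-- `Hspan s F` is the linear span of all `s`-th order partial derivatives of `F`. -/
noncomputable def Hspan {σ : Type*} (s : ℕ) (F : MvPolynomial σ ℂ) :
    Submodule ℂ (MvPolynomial σ ℂ) :=
  Submodule.span ℂ {P | ∃ l : List σ, l.length = s ∧ P = derivList l F}

/-- The symmetric (Waring) rank of `F` with respect to degree `d` decompositions:
the least `h` such that `F = ∑ᵢ cᵢ • Lᵢ^d` with `Lᵢ` linear forms. -/
noncomputable def srk {σ : Type*} (d : ℕ) (F : MvPolynomial σ ℂ) : ℕ :=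
  sInf {h | ∃ c : Fin h → ℂ, ∃ L : Fin h → MvPolynomial σ ℂ,
    (∀ i, (L i).IsHomogeneous 1) ∧ F = ∑ i, c i • (L i) ^ d}

/-! ### Basic properties of `derivList` -/

lemma derivList_nil {σ : Type*} (F : MvPolynomial σ ℂ) : derivList [] F = F := rfl

lemma derivList_cons {σ : Type*} (i : σ) (l : List σ) (F : MvPolynomial σ ℂ) :
    derivList (i :: l) F = derivList l (pderiv i F) := rfl

lemma derivList_append_single {σ : Type*} (l : List σ) (i : σ) (F : MvPolynomial σ ℂ) :
    derivList (l ++ [i]) F = pderiv i (derivList l F) := by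
  simp [derivList, List.foldl_append]

lemma derivList_add {σ : Type*} (l : List σ) (F G : MvPolynomial σ ℂ) :
    derivList l (F + G) = derivList l F + derivList l G := by
  induction l generalizing F G with
  | nil => rfl
  | cons i t ih => simp [derivList_cons, map_add, ih]

lemma derivList_smul {σ : Type*} (l : List σ) (a : ℂ) (F : MvPolynomial σ ℂ) :
    derivList l (a • F) = a • derivList l F := by
  induction l generalizing F with
  | nil => rfl
  | cons i t ih => simp [derivList_cons, map_smul, ih]

lemma derivList_zero {σ : Type*} (l : List σ) : derivList l (0 : MvPolynomial σ ℂ) = 0 := by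
  induction l with
  | nil => rfl
  | cons i t ih => simpa [derivList_cons] using ih

/-- `derivList` as a linear map. -/
noncomputable def derivListLM {σ : Type*} (l : List σ) :
    MvPolynomial σ ℂ →ₗ[ℂ] MvPolynomial σ ℂ where
  toFun := derivList l
  map_add' := derivList_add l
  map_smul' := derivList_smul l

lemma derivList_sum {σ ι : Type*} (l : List σ) (t : Finset ι) (f : ι → MvPolynomial σ ℂ) :
    derivList l (∑ i ∈ t, f i) = ∑ i ∈ t, derivList l (f i) :=
  map_sum (derivListLM l) f t

/-! ### Homogeneity and Euler's identity -/

lemma weight_one_single {σ : Type*} (i : σ) :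
    (Finsupp.weight (1 : σ → ℕ)) (Finsupp.single i 1) = 1 := by
  simp [Finsupp.weight_apply, Finsupp.sum_single_index]

lemma pderiv_isHomogeneous {σ : Type*} [DecidableEq σ] {F : MvPolynomial σ ℂ} {n : ℕ} (i : σ)
    (hF : F.IsHomogeneous n) : (pderiv i F).IsHomogeneous (n - 1) := by
  conv_lhs => rw [← support_sum_monomial_coeff F]
  rw [map_sum]
  apply IsHomogeneous.sum
  intro u hu
  rw [pderiv_monomial]
  rcases Nat.eq_zero_or_pos (u i) with h0 | hpos
  · rw [h0]; simp only [Nat.cast_zero, mul_zero]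
    simpa using isHomogeneous_zero σ ℂ (n - 1)
  · apply isHomogeneous_monomial
    have hdu : (Finsupp.weight (1 : σ → ℕ)) u = n := hF (mem_support_iff.mp hu)
    have hsplit : u = (u - Finsupp.single i 1) + Finsupp.single i 1 := by
      ext j
      rcases eq_or_ne j i with rfl | hne
      · simp; omega
      · simp [hne, Finsupp.single_eq_of_ne (Ne.symm hne)]
    have hdeg : (Finsupp.weight (1 : σ → ℕ)) u
        = (Finsupp.weight (1 : σ → ℕ)) (u - Finsupp.single i 1) + 1 := by
      conv_lhs => rw [hsplit]
      rw [map_add, weight_one_single]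
    rw [Finsupp.degree_eq_weight_one]
    simp only [Pi.one_def] at hdu hdeg ⊢
    omega

lemma derivList_isHomogeneous {σ : Type*} [DecidableEq σ] (l : List σ)
    {F : MvPolynomial σ ℂ} {n : ℕ} (hF : F.IsHomogeneous n) :
    (derivList l F).IsHomogeneous (n - l.length) := by
  induction l generalizing F n with
  | nil => simpa [derivList_nil] using hF
  | cons i t ih =>
    rw [derivList_cons]
    have := ih (pderiv_isHomogeneous i hF)
    have he : n - 1 - t.length = n - (i :: t).length := by
      simp only [List.length_cons]; omega
    rwa [he] at this

lemma euler_identity {σ : Type*} [Fintype σ] [DecidableEq σ] {F : MvPolynomial σ ℂ} {n : ℕ}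
    (hF : F.IsHomogeneous n) : ∑ i, X i * pderiv i F = C (n : ℂ) * F := by
  have h1 : ∀ i : σ, X i * pderiv i F = ∑ u ∈ F.support, monomial u (coeff u F * u i) := by
    intro i
    conv_lhs => rw [← support_sum_monomial_coeff F]
    rw [map_sum, Finset.mul_sum]
    refine Finset.sum_congr rfl fun u hu => ?_
    rw [pderiv_monomial]
    rcases Nat.eq_zero_or_pos (u i) with h0 | hpos
    · simp [h0]
    · have hX : (X i : MvPolynomial σ ℂ) = monomial (Finsupp.single i 1) 1 := by
        rw [X]
      rw [hX, monomial_mul, one_mul]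
      have huu : (Finsupp.single i 1) + (u - Finsupp.single i 1) = u := by
        ext j
        rcases eq_or_ne j i with rfl | hne
        · simp; omega
        · simp [Finsupp.single_eq_of_ne' (Ne.symm hne)]
      rw [huu]
  calc ∑ i, X i * pderiv i F = ∑ u ∈ F.support, ∑ i, monomial u (coeff u F * u i) := by
        rw [Finset.sum_comm]; exact Finset.sum_congr rfl fun i _ => h1 i
    _ = ∑ u ∈ F.support, C (n : ℂ) * monomial u (coeff u F) := by
        refine Finset.sum_congr rfl fun u hu => ?_
        rw [C_mul_monomial]
        have hmono : ∑ i, monomial u (coeff u F * (u i : ℂ)) =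
            monomial u (∑ i, coeff u F * (u i : ℂ)) := by
          rw [← map_sum (monomial u)]
        rw [hmono]
        congr 1
        rw [← Finset.mul_sum]
        have hdu : (Finsupp.weight (1 : σ → ℕ)) u = n := hF (mem_support_iff.mp hu)
        have hsum : ∑ i, (u i : ℂ) = (n : ℂ) := by
          have hnat : ∑ i, u i = n := by
            rw [← hdu, Finsupp.weight_apply, Finsupp.sum]
            rw [Finset.sum_subset (Finset.subset_univ u.support)]
            · simp
            · intro x _ hx
              simp [Finsupp.notMem_support_iff.mp hx]
          rw [← hnat]; push_cast; ring
        rw [hsum]; ring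
    _ = C (n : ℂ) * F := by rw [← Finset.mul_sum, support_sum_monomial_coeff]

lemma eq_zero_of_pderiv_all_zero {σ : Type*} [Fintype σ] [DecidableEq σ]
    {F : MvPolynomial σ ℂ} {n : ℕ} (hF : F.IsHomogeneous n) (hn : n ≠ 0)
    (h : ∀ i, pderiv i F = 0) : F = 0 := by
  have heuler := euler_identity hF
  simp only [h, mul_zero, Finset.sum_const_zero] at heuler
  have hC : (C (n : ℂ) : MvPolynomial σ ℂ) ≠ 0 := by
    simp only [ne_eq, C_eq_zero, Nat.cast_eq_zero]; exact hn
  rcases mul_eq_zero.mp heuler.symm with h' | h'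
  · exact absurd h' hC
  · exact h'

lemma eq_zero_of_derivList_all_zero {σ : Type*} [Fintype σ] [DecidableEq σ] :
    ∀ (s : ℕ) {d : ℕ} {F : MvPolynomial σ ℂ}, s ≤ d → F.IsHomogeneous d →
      (∀ l : List σ, l.length = s → derivList l F = 0) → F = 0 := by
  intro s
  induction s with
  | zero => intro d F _ _ h; simpa [derivList_nil] using h [] rfl
  | succ s ih =>
    intro d F hsd hF h
    refine ih (by omega) hF fun l hl => ?_
    have hhom : (derivList l F).IsHomogeneous (d - s) := by
      have := derivList_isHomogeneous l hF
      rwa [hl] at this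
    refine eq_zero_of_pderiv_all_zero hhom (by omega) fun i => ?_
    rw [← derivList_append_single]
    exact h (l ++ [i]) (by simp [hl])

/-! ### Derivatives of powers of linear forms -/

lemma isHomogeneous_zero_exists_C {σ : Type*} {P : MvPolynomial σ ℂ}
    (h : P.IsHomogeneous 0) : ∃ c, P = C c := by
  classical
  refine ⟨coeff 0 P, ?_⟩
  ext m
  rcases eq_or_ne m 0 with rfl | hm
  · simp [coeff_C]
  · rw [h.coeff_eq_zero (by rwa [ne_eq, Finsupp.degree_eq_zero_iff]), coeff_C,
      if_neg fun hc => hm hc.symm]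

lemma pderiv_linear_eq_C {σ : Type*} [DecidableEq σ] {L : MvPolynomial σ ℂ}
    (hL : L.IsHomogeneous 1) (i : σ) : ∃ e : ℂ, pderiv i L = C e :=
  isHomogeneous_zero_exists_C (by simpa using pderiv_isHomogeneous i hL)

lemma derivList_pow_linear {σ : Type*} [DecidableEq σ] {L : MvPolynomial σ ℂ}
    (hL : L.IsHomogeneous 1) (l : List σ) (k : ℕ) :
    ∃ a : ℂ, derivList l (L ^ k) = a • L ^ (k - l.length) := by
  induction l generalizing k with
  | nil => exact ⟨1, by simp [derivList_nil]⟩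
  | cons i t ih =>
    obtain ⟨e, he⟩ := pderiv_linear_eq_C hL i
    obtain ⟨a, ha⟩ := ih (k - 1)
    refine ⟨(k : ℂ) * e * a, ?_⟩
    rw [derivList_cons, pderiv_pow, he]
    have hsm : (k : MvPolynomial σ ℂ) * L ^ (k - 1) * C e = ((k : ℂ) * e) • L ^ (k - 1) := by
      rw [smul_eq_C_mul, map_mul, ← map_natCast (C : ℂ →+* MvPolynomial σ ℂ) k]
      ring
    rw [hsm, derivList_smul, ha, smul_smul]
    have hexp : k - 1 - t.length = k - (i :: t).length := by
      simp only [List.length_cons]; omega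
    rw [hexp, mul_assoc]

/-! ### Derivatives and renaming along `Sum.inl`/`Sum.inr` -/

section Sum
variable {σ₁ σ₂ : Type*}

lemma pderiv_inr_rename_inl (j : σ₂) (P : MvPolynomial σ₁ ℂ) :
    pderiv (Sum.inr j) (rename (Sum.inl : σ₁ → σ₁ ⊕ σ₂) P) = 0 := by
  classical
  apply pderiv_eq_zero_of_notMem_vars
  intro h
  obtain ⟨x, -, hx⟩ := mem_vars_rename _ _ h
  exact Sum.inl_ne_inr hx

lemma pderiv_inl_rename_inr (i : σ₁) (P : MvPolynomial σ₂ ℂ) :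
    pderiv (Sum.inl i) (rename (Sum.inr : σ₂ → σ₁ ⊕ σ₂) P) = 0 := by
  classical
  apply pderiv_eq_zero_of_notMem_vars
  intro h
  obtain ⟨x, -, hx⟩ := mem_vars_rename _ _ h
  exact Sum.inr_ne_inl hx

lemma derivList_rename_inl_eq_zero (l : List (σ₁ ⊕ σ₂)) (P : MvPolynomial σ₁ ℂ)
    (h : ∃ j, Sum.inr j ∈ l) : derivList l (rename (Sum.inl : σ₁ → σ₁ ⊕ σ₂) P) = 0 := by
  induction l generalizing P with
  | nil => obtain ⟨j, hj⟩ := h; simp at hj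
  | cons a t ih =>
    obtain ⟨j, hj⟩ := h
    cases a with
    | inl i =>
      rw [derivList_cons, pderiv_rename Sum.inl_injective]
      exact ih _ ⟨j, by simpa using hj⟩
    | inr j' =>
      rw [derivList_cons, pderiv_inr_rename_inl, derivList_zero]

lemma derivList_rename_inr_eq_zero (l : List (σ₁ ⊕ σ₂)) (P : MvPolynomial σ₂ ℂ)
    (h : ∃ i, Sum.inl i ∈ l) : derivList l (rename (Sum.inr : σ₂ → σ₁ ⊕ σ₂) P) = 0 := by
  induction l generalizing P with
  | nil => obtain ⟨j, hj⟩ := h; simp at hj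
  | cons a t ih =>
    obtain ⟨j, hj⟩ := h
    cases a with
    | inr i =>
      rw [derivList_cons, pderiv_rename Sum.inr_injective]
      exact ih _ ⟨j, by simpa using hj⟩
    | inl j' =>
      rw [derivList_cons, pderiv_inl_rename_inr, derivList_zero]

lemma derivList_rename_inl_mem (l : List (σ₁ ⊕ σ₂)) (P : MvPolynomial σ₁ ℂ) :
    ∃ Q, derivList l (rename (Sum.inl : σ₁ → σ₁ ⊕ σ₂) P) = rename Sum.inl Q := by
  induction l generalizing P with
  | nil => exact ⟨P, rfl⟩
  | cons a t ih =>
    cases a with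
    | inl i =>
      rw [derivList_cons, pderiv_rename Sum.inl_injective]
      exact ih _
    | inr j =>
      rw [derivList_cons, pderiv_inr_rename_inl]
      have := ih (0 : MvPolynomial σ₁ ℂ)
      rwa [map_zero] at this

lemma derivList_rename_inr_mem (l : List (σ₁ ⊕ σ₂)) (P : MvPolynomial σ₂ ℂ) :
    ∃ Q, derivList l (rename (Sum.inr : σ₂ → σ₁ ⊕ σ₂) P) = rename Sum.inr Q := by
  induction l generalizing P with
  | nil => exact ⟨P, rfl⟩
  | cons a t ih =>
    cases a with
    | inr i =>
      rw [derivList_cons, pderiv_rename Sum.inr_injective]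
      exact ih _
    | inl j =>
      rw [derivList_cons, pderiv_inl_rename_inr]
      have := ih (0 : MvPolynomial σ₂ ℂ)
      rwa [map_zero] at this

/-- The algebra map killing the `Sum.inr` variables. -/
noncomputable def proj1 : MvPolynomial (σ₁ ⊕ σ₂) ℂ →ₐ[ℂ] MvPolynomial (σ₁ ⊕ σ₂) ℂ :=
  aeval (Sum.elim (fun i => (X (Sum.inl i) : MvPolynomial (σ₁ ⊕ σ₂) ℂ)) (fun _ => 0))

lemma proj1_rename_inl (P : MvPolynomial σ₁ ℂ) :
    proj1 (rename (Sum.inl : σ₁ → σ₁ ⊕ σ₂) P) = rename Sum.inl P := by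
  rw [proj1, aeval_rename, Sum.elim_comp_inl]
  rw [rename_eq_aeval]; rfl

lemma proj1_rename_inr (Q : MvPolynomial σ₂ ℂ) :
    proj1 (rename (Sum.inr : σ₂ → σ₁ ⊕ σ₂) Q) = C (constantCoeff Q) := by
  rw [proj1, aeval_rename, Sum.elim_comp_inr]
  rw [aeval_zero']
  rfl

end Sum

/-! ### Finite-dimensionality of `Hspan` -/

lemma hspan_fd {σ : Type*} [Fintype σ] (s : ℕ) (F : MvPolynomial σ ℂ) :
    FiniteDimensional ℂ (Hspan s F) := by
  apply FiniteDimensional.span_of_finite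
  have hsub : {P | ∃ l : List σ, l.length = s ∧ P = derivList l F} ⊆
      Set.range (fun g : Fin s → σ => derivList (List.ofFn g) F) := by
    rintro P ⟨l, hl, rfl⟩
    subst hl
    exact ⟨l.get, by simp [List.ofFn_get]⟩
  exact Set.Finite.subset (Set.finite_range _) hsub

theorem strassen_symmetric (n m d s : ℕ) (hs0 : 0 < s) (hsd : s < d)
    (F₀ : MvPolynomial (Fin (n + 1)) ℂ) (G₀ : MvPolynomial (Fin (m + 1)) ℂ)
    (hF : F₀.IsHomogeneous d) (hG : G₀.IsHomogeneous d)
    (F : MvPolynomial (Fin (n + 1) ⊕ Fin (m + 1)) ℂ)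
    (G : MvPolynomial (Fin (n + 1) ⊕ Fin (m + 1)) ℂ)
    (hFdef : F = rename Sum.inl F₀) (hGdef : G = rename Sum.inr G₀)
    (hdF : Module.finrank ℂ (Hspan s F) = srk d F)
    (hdG : Module.finrank ℂ (Hspan s G) = srk d G) :
    srk d (F + G) = srk d F + srk d G := by
  classical
  have hFh : F.IsHomogeneous d := by rw [hFdef]; exact hF.rename_isHomogeneous
  have hGh : G.IsHomogeneous d := by rw [hGdef]; exact hG.rename_isHomogeneous
  -- the decomposition sets
  set SF : Set ℕ := {h | ∃ c : Fin h → ℂ, ∃ L : Fin h → MvPolynomial (Fin (n + 1) ⊕ Fin (m + 1)) ℂ,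
    (∀ i, (L i).IsHomogeneous 1) ∧ F = ∑ i, c i • (L i) ^ d} with hSF
  set SG : Set ℕ := {h | ∃ c : Fin h → ℂ, ∃ L : Fin h → MvPolynomial (Fin (n + 1) ⊕ Fin (m + 1)) ℂ,
    (∀ i, (L i).IsHomogeneous 1) ∧ G = ∑ i, c i • (L i) ^ d} with hSG
  set SFG : Set ℕ := {h | ∃ c : Fin h → ℂ, ∃ L : Fin h → MvPolynomial (Fin (n + 1) ⊕ Fin (m + 1)) ℂ,
    (∀ i, (L i).IsHomogeneous 1) ∧ F + G = ∑ i, c i • (L i) ^ d} with hSFG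
  have hsrkF : srk d F = sInf SF := rfl
  have hsrkG : srk d G = sInf SG := rfl
  have hsrkFG : srk d (F + G) = sInf SFG := rfl
  haveI := hspan_fd s F
  haveI := hspan_fd s G
  haveI := hspan_fd s (F + G)
  -- nonemptiness of the decomposition sets
  have hne : ∀ (H : MvPolynomial (Fin (n + 1) ⊕ Fin (m + 1)) ℂ) (SH : Set ℕ),
      SH = {h | ∃ c : Fin h → ℂ, ∃ L : Fin h → MvPolynomial (Fin (n + 1) ⊕ Fin (m + 1)) ℂ,
        (∀ i, (L i).IsHomogeneous 1) ∧ H = ∑ i, c i • (L i) ^ d} →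
      H.IsHomogeneous d → Module.finrank ℂ (Hspan s H) = sInf SH → SH.Nonempty := by
    intro H SH hSH hHh hdH
    by_contra hcon
    have hempty : SH = ∅ := Set.not_nonempty_iff_eq_empty.mp hcon
    have h0 : Module.finrank ℂ (Hspan s H) = 0 := by rw [hdH, hempty, Nat.sInf_empty]
    haveI := hspan_fd s H
    have hbot : Hspan s H = ⊥ := Submodule.finrank_eq_zero.mp h0
    have hallzero : ∀ l : List (Fin (n + 1) ⊕ Fin (m + 1)), l.length = s → derivList l H = 0 := by
      intro l hl
      have hmem : derivList l H ∈ Hspan s H :=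
        Submodule.subset_span ⟨l, hl, rfl⟩
      rwa [hbot, Submodule.mem_bot] at hmem
    have hH0 : H = 0 := eq_zero_of_derivList_all_zero s (le_of_lt hsd) hHh hallzero
    have : (0 : ℕ) ∈ SH := by
      rw [hSH]
      exact ⟨Fin.elim0, Fin.elim0, fun i => i.elim0, by simp [hH0]⟩
    rw [hempty] at this
    exact this
  have hFne : SF.Nonempty := hne F SF hSF hFh (by rw [← hsrkF]; exact hdF)
  have hGne : SG.Nonempty := hne G SG hSG hGh (by rw [← hsrkG]; exact hdG)
  -- minimal decompositions of F and G
  have hFmem : srk d F ∈ SF := by rw [hsrkF]; exact Nat.sInf_mem hFne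
  have hGmem : srk d G ∈ SG := by rw [hsrkG]; exact Nat.sInf_mem hGne
  obtain ⟨c₁, L₁, hL₁, e₁⟩ := hFmem
  obtain ⟨c₂, L₂, hL₂, e₂⟩ := hGmem
  -- upper bound
  have hupper : srk d (F + G) ≤ srk d F + srk d G := by
    rw [hsrkFG]
    apply Nat.sInf_le
    refine ⟨Fin.append c₁ c₂, Fin.append L₁ L₂, ?_, ?_⟩
    · intro i
      refine Fin.addCases (fun j => ?_) (fun j => ?_) i
      · rw [Fin.append_left]; exact hL₁ j
      · rw [Fin.append_right]; exact hL₂ j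
    · rw [Fin.sum_univ_add]
      simp only [Fin.append_left, Fin.append_right]
      rw [← e₁, ← e₂]
  have hFGne : SFG.Nonempty := by
    refine ⟨srk d F + srk d G, ?_⟩
    refine ⟨Fin.append c₁ c₂, Fin.append L₁ L₂, ?_, ?_⟩
    · intro i
      refine Fin.addCases (fun j => ?_) (fun j => ?_) i
      · rw [Fin.append_left]; exact hL₁ j
      · rw [Fin.append_right]; exact hL₂ j
    · rw [Fin.sum_univ_add]
      simp only [Fin.append_left, Fin.append_right]
      rw [← e₁, ← e₂]
  -- the span of s-th derivatives of F + G is the (direct) sum of those of F and G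
  have hsup : Hspan s (F + G) = Hspan s F ⊔ Hspan s G := by
    apply le_antisymm
    · rw [Hspan, Submodule.span_le]
      rintro P ⟨l, hl, rfl⟩
      rw [derivList_add]
      exact add_mem
        (Submodule.mem_sup_left (Submodule.subset_span ⟨l, hl, rfl⟩))
        (Submodule.mem_sup_right (Submodule.subset_span ⟨l, hl, rfl⟩))
    · apply sup_le
      · rw [Hspan, Submodule.span_le]
        rintro P ⟨l, hl, rfl⟩
        rcases Classical.em (∃ j : Fin (m + 1), Sum.inr j ∈ l) with hr | hr
        · rw [hFdef, derivList_rename_inl_eq_zero _ _ hr]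
          exact Submodule.zero_mem _
        · have hlne : l ≠ [] := by
            intro h0; rw [h0] at hl; simp at hl; omega
          obtain ⟨a, t, rfl⟩ := List.exists_cons_of_ne_nil hlne
          have hG0 : derivList (a :: t) G = 0 := by
            rw [hGdef]
            apply derivList_rename_inr_eq_zero
            cases a with
            | inl i => exact ⟨i, List.mem_cons_self⟩
            | inr j => exact absurd ⟨j, List.mem_cons_self⟩ hr
          have : derivList (a :: t) F = derivList (a :: t) (F + G) := by
            rw [derivList_add, hG0, add_zero]
          rw [this]
          exact Submodule.subset_span ⟨a :: t, hl, rfl⟩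
      · rw [Hspan, Submodule.span_le]
        rintro P ⟨l, hl, rfl⟩
        rcases Classical.em (∃ i : Fin (n + 1), Sum.inl i ∈ l) with hr | hr
        · rw [hGdef, derivList_rename_inr_eq_zero _ _ hr]
          exact Submodule.zero_mem _
        · have hlne : l ≠ [] := by
            intro h0; rw [h0] at hl; simp at hl; omega
          obtain ⟨a, t, rfl⟩ := List.exists_cons_of_ne_nil hlne
          have hF0 : derivList (a :: t) F = 0 := by
            rw [hFdef]
            apply derivList_rename_inl_eq_zero
            cases a with
            | inr j => exact ⟨j, List.mem_cons_self⟩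
            | inl i => exact absurd ⟨i, List.mem_cons_self⟩ hr
          have : derivList (a :: t) G = derivList (a :: t) (F + G) := by
            rw [derivList_add, hF0, zero_add]
          rw [this]
          exact Submodule.subset_span ⟨a :: t, hl, rfl⟩
  -- the two spans intersect trivially
  have hinf : Hspan s F ⊓ Hspan s G = ⊥ := by
    set π : MvPolynomial (Fin (n + 1) ⊕ Fin (m + 1)) ℂ →ₐ[ℂ] MvPolynomial (Fin (n + 1) ⊕ Fin (m + 1)) ℂ := proj1 with hπ
    have h1 : Hspan s F ≤ LinearMap.eqLocus π.toLinearMap (LinearMap.id) := by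
      rw [Hspan, Submodule.span_le]
      rintro P ⟨l, hl, rfl⟩
      obtain ⟨Q, hQ⟩ := derivList_rename_inl_mem l F₀
      rw [hFdef]
      have hfix : π (derivList l (rename Sum.inl F₀)) = derivList l (rename Sum.inl F₀) := by
        rw [hQ, hπ, proj1_rename_inl]
      simpa [LinearMap.mem_eqLocus] using hfix
    have h2 : Hspan s G ≤ LinearMap.ker π.toLinearMap := by
      rw [Hspan, Submodule.span_le]
      rintro P ⟨l, hl, rfl⟩
      obtain ⟨Q, hQ⟩ := derivList_rename_inr_mem l G₀
      rw [hGdef] at *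
      have hhom : (derivList l (rename Sum.inr G₀)).IsHomogeneous (d - s) := by
        have := derivList_isHomogeneous l (F := rename Sum.inr G₀) hG.rename_isHomogeneous
        rwa [hl] at this
      have hcc : constantCoeff (derivList l (rename Sum.inr G₀)) = 0 := by
        rw [constantCoeff_eq]
        exact hhom.coeff_eq_zero (by rw [map_zero]; omega)
      have hker : π (derivList l (rename Sum.inr G₀)) = 0 := by
        rw [hQ, hπ, proj1_rename_inr, ← constantCoeff_rename Sum.inr Q, ← hQ, hcc, map_zero]
      simpa [LinearMap.mem_ker] using hker
    rw [eq_bot_iff]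
    rintro p ⟨hp1, hp2⟩
    have e1 : π p = p := h1 hp1
    have e2 : π p = 0 := h2 hp2
    rw [Submodule.mem_bot, ← e1, e2]
  -- dimension count
  have hrk : Module.finrank ℂ (Hspan s (F + G)) =
      Module.finrank ℂ (Hspan s F) + Module.finrank ℂ (Hspan s G) := by
    rw [hsup]
    have := Submodule.finrank_sup_add_finrank_inf_eq (Hspan s F) (Hspan s G)
    rw [hinf, finrank_bot] at this
    omega
  -- lower bound via catalecticants
  have hlower : srk d F + srk d G ≤ srk d (F + G) := by
    have hFGmem : srk d (F + G) ∈ SFG := by rw [hsrkFG]; exact Nat.sInf_mem hFGne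
    obtain ⟨c, L, hLhom, hsum⟩ := hFGmem
    set W : Submodule ℂ (MvPolynomial (Fin (n + 1) ⊕ Fin (m + 1)) ℂ) :=
      Submodule.span ℂ (Set.range fun i : Fin (srk d (F + G)) => L i ^ (d - s)) with hW
    have hWle : Hspan s (F + G) ≤ W := by
      rw [Hspan, Submodule.span_le]
      rintro P ⟨l, hl, rfl⟩
      rw [hsum, derivList_sum]
      apply Submodule.sum_mem
      intro i _
      rw [derivList_smul]
      obtain ⟨a, ha⟩ := derivList_pow_linear (hLhom i) l d
      rw [ha, hl]
      exact Submodule.smul_mem _ _ (Submodule.smul_mem _ _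
        (Submodule.subset_span ⟨i, rfl⟩))
    haveI : FiniteDimensional ℂ W :=
      FiniteDimensional.span_of_finite ℂ (Set.finite_range _)
    have hle1 : Module.finrank ℂ (Hspan s (F + G)) ≤ Module.finrank ℂ W :=
      Submodule.finrank_mono hWle
    have hle2 : Module.finrank ℂ W ≤ srk d (F + G) := by
      have hWeq : (Set.range fun i : Fin (srk d (F + G)) => L i ^ (d - s)) =
          ↑(Finset.univ.image fun i : Fin (srk d (F + G)) => L i ^ (d - s)) := by
        simp [Finset.coe_image]
      rw [hW, hWeq]
      refine le_trans (finrank_span_finset_le_card _) ?_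
      refine le_trans (Finset.card_image_le) ?_
      simp
    have := hrk
    rw [hdF, hdG] at this
    omega
  omega
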